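/- For an element μ of the restricted Lorentz group, the centralizer of μ in the restricted Lorentz group is an abelian group if and only if μ² ≠ 1. -/

import Mathlib

open Matrix

/-- The group `SL(2,ℂ)`. -/
abbrev SL2C := Matrix.SpecialLinearGroup (Fin 2) ℂ

/-- The restricted Lorentz group, realized as `PSL(2,ℂ) = SL(2,ℂ)/{±1}`. -/
abbrev L1 := SL2C ⧸ Subgroup.center SL2C

abbrev Mat2 := Matrix (Fin 2) (Fin 2) ℂ

lemma mem_center_iff' (S : SL2C) :
    S ∈ Subgroup.center SL2C ↔ (S : Mat2) = 1 ∨ (S : Mat2) = -1 := by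
  rw [Matrix.SpecialLinearGroup.mem_center_iff]
  constructor
  · rintro ⟨r, hr, hS⟩
    rw [show Fintype.card (Fin 2) = 2 by simp] at hr
    have h0 : (r - 1) * (r + 1) = 0 := by linear_combination hr
    rcases mul_eq_zero.mp h0 with h | h
    · left
      rw [← hS, show r = 1 by linear_combination h]
      ext i j
      fin_cases i <;> fin_cases j <;> simp [Matrix.scalar_apply]
    · right
      rw [← hS, show r = -1 by linear_combination h]
      ext i j
      fin_cases i <;> fin_cases j <;> simp [Matrix.scalar_apply]
  · rintro (h | h)
    · exact ⟨1, by norm_num, by ext i j; fin_cases i <;> fin_cases j <;> simp [h, Matrix.scalar_apply]⟩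
    · exact ⟨-1, by norm_num, by ext i j; fin_cases i <;> fin_cases j <;> simp [h, Matrix.scalar_apply]⟩

lemma quot_eq_iff (A B : SL2C) :
    (QuotientGroup.mk A : L1) = QuotientGroup.mk B ↔
      (A : Mat2) = B ∨ (A : Mat2) = -(B : Mat2) := by
  rw [QuotientGroup.eq, mem_center_iff']
  have h2 : ((A⁻¹ : SL2C) : Mat2) * (A : Mat2) = 1 := by
    rw [← Matrix.SpecialLinearGroup.coe_mul, inv_mul_cancel]; simp
  constructor
  · rintro (h | h)
    · left
      have h1 : A⁻¹ * B = 1 := Subtype.ext (by simpa using h)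
      rw [inv_mul_eq_one.mp h1]
    · right
      have e : (B : Mat2)
          = (A : Mat2) * ((A⁻¹ * B : SL2C) : Mat2) := by
        rw [← Matrix.SpecialLinearGroup.coe_mul]
        rw [mul_inv_cancel_left]
      rw [h, mul_neg, mul_one] at e
      rw [e, neg_neg]
  · rintro (h | h)
    · left
      have : A = B := Subtype.ext h
      subst this; simp
    · right
      have e : ((A⁻¹ * B : SL2C) : Mat2)
          = ((A⁻¹ : SL2C) : Mat2) * B := by simp
      have hB : (B : Mat2) = -(A : Mat2) := by
        rw [h, neg_neg]
      rw [e, hB, mul_neg, h2]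

lemma commutant_key (a b c d x y z w x' y' z' w' : ℂ) (hb : b ≠ 0)
    (g1 : y*c = z*b) (g2 : x*b + y*d = a*y + b*w)
    (g4 : y'*c = z'*b) (g5 : x'*b + y'*d = a*y' + b*w') :
    y*z' = z*y' ∧ x*y' + y*w' = x'*y + y'*w ∧ z*x' + w*z' = z'*x + w'*z := by
  have hz : z = y*c/b := by rw [eq_div_iff hb]; linear_combination -g1
  have hw : w = (x*b + y*d - a*y)/b := by rw [eq_div_iff hb]; linear_combination -g2
  have hz' : z' = y'*c/b := by rw [eq_div_iff hb]; linear_combination -g4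
  have hw' : w' = (x'*b + y'*d - a*y')/b := by rw [eq_div_iff hb]; linear_combination -g5
  subst hz hw hz' hw'
  refine ⟨by field_simp, by field_simp; ring, by field_simp; ring⟩

lemma commutant_aux (a b c d p q r s p' q' r' s' : ℂ)
    (hM : b ≠ 0 ∨ c ≠ 0 ∨ a ≠ d)
    (e1 : q*c = r*b) (e2 : p*b + q*d = a*q + b*s) (e3 : r*a + s*c = c*p + d*r)
    (f1 : q'*c = r'*b) (f2 : p'*b + q'*d = a*q' + b*s') (f3 : r'*a + s'*c = c*p' + d*r') :
    q*r' = r*q' ∧ p*q' + q*s' = p'*q + q'*s ∧ r*p' + s*r' = r'*p + s'*r := by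
  have transp : c ≠ 0 →
      q*r' = r*q' ∧ p*q' + q*s' = p'*q + q'*s ∧ r*p' + s*r' = r'*p + s'*r := by
    intro hc
    obtain ⟨g1, g2, g3⟩ := commutant_key a c b d p r q s p' r' q' s' hc
      (by linear_combination -e1) (by linear_combination -e3)
      (by linear_combination -f1) (by linear_combination -f3)
    exact ⟨by linear_combination -g1, by linear_combination -g3, by linear_combination -g2⟩
  rcases hM with hb | hc | had
  · exact commutant_key a b c d p q r s p' q' r' s' hb e1 e2 f1 f2
  · exact transp hc
  · by_cases hb : b = 0
    · by_cases hc : c = 0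
      · subst hb hc
        have had' : d - a ≠ 0 := fun h => had (by linear_combination -h)
        have hq : q = 0 := by
          rcases mul_eq_zero.mp (show q * (d - a) = 0 by linear_combination e2) with h | h
          · exact h
          · exact absurd h had'
        have hr : r = 0 := by
          rcases mul_eq_zero.mp (show r * (d - a) = 0 by linear_combination -e3) with h | h
          · exact h
          · exact absurd h had'
        have hq' : q' = 0 := by
          rcases mul_eq_zero.mp (show q' * (d - a) = 0 by linear_combination f2) with h | h
          · exact h
          · exact absurd h had'
        have hr' : r' = 0 := by
          rcases mul_eq_zero.mp (show r' * (d - a) = 0 by linear_combination -f3) with h | h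
          · exact h
          · exact absurd h had'
        subst hq hr hq' hr'
        exact ⟨by ring, by ring, by ring⟩
      · exact transp hc
    · exact commutant_key a b c d p q r s p' q' r' s' hb e1 e2 f1 f2

lemma commutant_matrix (M A B : Mat2)
    (hns : M 0 1 ≠ 0 ∨ M 1 0 ≠ 0 ∨ M 0 0 ≠ M 1 1)
    (hA : A * M = M * A) (hB : B * M = M * B) : A * B = B * A := by
  obtain ⟨a, b, c, d, rfl⟩ : ∃ a b c d, M = !![a,b;c,d] := ⟨_, _, _, _, Matrix.eta_fin_two M⟩
  obtain ⟨p, q, r, s, rfl⟩ : ∃ a b c d, A = !![a,b;c,d] := ⟨_, _, _, _, Matrix.eta_fin_two A⟩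
  obtain ⟨p', q', r', s', rfl⟩ : ∃ a b c d, B = !![a,b;c,d] := ⟨_, _, _, _, Matrix.eta_fin_two B⟩
  have EA := fun i j => Matrix.ext_iff.mpr hA i j
  have EB := fun i j => Matrix.ext_iff.mpr hB i j
  have e1 : q*c = r*b := by
    have := EA 0 0; simp [Matrix.mul_apply, Fin.sum_univ_two] at this; linear_combination this
  have e2 : p*b + q*d = a*q + b*s := by
    have := EA 0 1; simp [Matrix.mul_apply, Fin.sum_univ_two] at this; linear_combination this
  have e3 : r*a + s*c = c*p + d*r := by
    have := EA 1 0; simp [Matrix.mul_apply, Fin.sum_univ_two] at this; linear_combination this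
  have f1 : q'*c = r'*b := by
    have := EB 0 0; simp [Matrix.mul_apply, Fin.sum_univ_two] at this; linear_combination this
  have f2 : p'*b + q'*d = a*q' + b*s' := by
    have := EB 0 1; simp [Matrix.mul_apply, Fin.sum_univ_two] at this; linear_combination this
  have f3 : r'*a + s'*c = c*p' + d*r' := by
    have := EB 1 0; simp [Matrix.mul_apply, Fin.sum_univ_two] at this; linear_combination this
  have hns' : b ≠ 0 ∨ c ≠ 0 ∨ a ≠ d := by
    rcases hns with h | h | h
    · left; simpa using h
    · right; left; simpa using h
    · right; right; simpa using h
  obtain ⟨G1, G2, G3⟩ := commutant_aux a b c d p q r s p' q' r' s' hns' e1 e2 e3 f1 f2 f3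
  ext i j
  fin_cases i <;> fin_cases j <;> simp [Matrix.mul_apply, Fin.sum_univ_two]
  · linear_combination G1
  · linear_combination G2
  · linear_combination G3
  · linear_combination -G1

lemma sq_eq_one_cases (M : Mat2) (hdet : M.det = 1) (hsq : M * M = 1) :
    M = 1 ∨ M = -1 := by
  obtain ⟨a, b, c, d, rfl⟩ : ∃ a b c d, M = !![a,b;c,d] := ⟨_, _, _, _, Matrix.eta_fin_two M⟩
  rw [Matrix.det_fin_two_of] at hdet
  have E := fun i j => Matrix.ext_iff.mpr hsq i j
  have e00 : a*a + b*c = 1 := by have := E 0 0; simpa [Matrix.mul_apply, Fin.sum_univ_two] using this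
  have e01 : a*b + b*d = 0 := by have := E 0 1; simpa [Matrix.mul_apply, Fin.sum_univ_two] using this
  have e10 : c*a + d*c = 0 := by have := E 1 0; simpa [Matrix.mul_apply, Fin.sum_univ_two] using this
  have had : a + d ≠ 0 := by
    intro h
    have : (0:ℂ) = 2 := by linear_combination e00 + hdet - a * h
    norm_num at this
  have hb0 : b = 0 := by
    rcases mul_eq_zero.mp (show b * (a + d) = 0 by linear_combination e01) with h | h
    · exact h
    · exact absurd h had
  have hc0 : c = 0 := by
    rcases mul_eq_zero.mp (show c * (a + d) = 0 by linear_combination e10) with h | h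
    · exact h
    · exact absurd h had
  have ha2 : a*a = 1 := by linear_combination e00 - c * hb0
  have ha0 : a ≠ 0 := by intro h; rw [h] at ha2; norm_num at ha2
  have hda : d = a := by
    have h2 : a * (d - a) = 0 := by linear_combination hdet - ha2 + b * hc0
    rcases mul_eq_zero.mp h2 with h | h
    · exact absurd h ha0
    · linear_combination h
  rcases mul_eq_zero.mp (show (a - 1) * (a + 1) = 0 by linear_combination ha2) with h | h
  · left
    ext i j
    fin_cases i <;> fin_cases j <;>
      simp [hb0, hc0, hda, show a = 1 by linear_combination h]
  · right
    ext i j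
    fin_cases i <;> fin_cases j <;>
      simp [hb0, hc0, hda, show a = -1 by linear_combination h]

lemma anticomm_sq_eq_neg_one (M C : SL2C)
    (h : (C : Mat2) * (M : Mat2) = -((M : Mat2) * (C : Mat2))) :
    (M : Mat2) * (M : Mat2) = -1 := by
  have hCinv : ((C⁻¹ : SL2C) : Mat2) * (C : Mat2) = 1 := by
    rw [← Matrix.SpecialLinearGroup.coe_mul, inv_mul_cancel]; simp
  have hCinv' : (C : Mat2) * ((C⁻¹ : SL2C) : Mat2) = 1 := by
    rw [← Matrix.SpecialLinearGroup.coe_mul, mul_inv_cancel]; simp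
  have htr : Matrix.trace (M : Mat2) = 0 := by
    have h2 : (M : Mat2) = -(((C⁻¹ : SL2C) : Mat2) * ((M : Mat2) * (C : Mat2))) := by
      calc (M : Mat2) = ((C⁻¹ : SL2C) : Mat2) * ((C : Mat2) * (M : Mat2)) := by
            rw [← mul_assoc, hCinv, one_mul]
        _ = ((C⁻¹ : SL2C) : Mat2) * (-((M : Mat2) * (C : Mat2))) := by rw [h]
        _ = -(((C⁻¹ : SL2C) : Mat2) * ((M : Mat2) * (C : Mat2))) := by rw [mul_neg]
    have h3 : Matrix.trace (M : Mat2) = -Matrix.trace (M : Mat2) := by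
      nth_rewrite 1 [h2]
      rw [Matrix.trace_neg, Matrix.trace_mul_comm, mul_assoc, hCinv', mul_one]
    linear_combination (1/2 : ℂ) * h3
  obtain ⟨a, b, c, d, hM⟩ : ∃ a b c d, (M : Mat2) = !![a,b;c,d] :=
    ⟨_, _, _, _, Matrix.eta_fin_two _⟩
  have hdet : a*d - b*c = 1 := by
    have := M.2
    rw [hM, Matrix.det_fin_two_of] at this
    exact this
  rw [hM, Matrix.trace_fin_two_of] at htr
  rw [hM]
  ext i j
  fin_cases i <;> fin_cases j <;> simp [Matrix.mul_apply, Fin.sum_univ_two]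
  · linear_combination -hdet + a * htr
  · linear_combination b * htr
  · linear_combination c * htr
  · linear_combination -hdet + d * htr

lemma smul_cancel_mat (c : ℂ) (hc : c ≠ 0) (X Y : Mat2) (h : c • X = c • Y) : X = Y := by
  have h2 := congrArg (fun Z : Mat2 => c⁻¹ • Z) h
  simpa [smul_smul, inv_mul_cancel₀ hc] using h2

lemma eq_neg_self_mat (X : Mat2) (h : X = -X) : X = 0 := by
  have h2 : (2 : ℂ) • X = 0 := by
    rw [two_smul]
    nth_rewrite 2 [h]
    simp
  have h3 := congrArg (fun Z : Mat2 => (2 : ℂ)⁻¹ • Z) h2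
  simpa [smul_smul] using h3

/-- The centralizer of `μ` in the restricted Lorentz group is abelian
if and only if `μ² ≠ 1`. -/
theorem centralizer_abelian_iff (μ : L1) :
    (∀ a b : L1, a * μ = μ * a → b * μ = μ * b → a * b = b * a) ↔ μ ^ 2 ≠ 1 := by
  obtain ⟨M, rfl⟩ := QuotientGroup.mk_surjective μ
  have mk_mul : ∀ X Y : SL2C,
      (QuotientGroup.mk (X * Y) : L1) = QuotientGroup.mk X * QuotientGroup.mk Y :=
    fun _ _ => rfl
  constructor
  · intro habel h1
    have h2 : (QuotientGroup.mk (M * M) : L1) = QuotientGroup.mk 1 := by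
      rw [mk_mul, QuotientGroup.mk_one]
      simpa [sq] using h1
    have h3 := (quot_eq_iff _ _).mp h2
    rw [Matrix.SpecialLinearGroup.coe_mul] at h3
    simp only [Matrix.SpecialLinearGroup.coe_one] at h3
    rcases h3 with hI | hNeg
    · -- μ = 1
      have hμ1 : (QuotientGroup.mk M : L1) = QuotientGroup.mk (1 : SL2C) := by
        apply (quot_eq_iff _ _).mpr
        simpa using sq_eq_one_cases (M : Mat2) M.2 hI
      rw [QuotientGroup.mk_one] at hμ1
      set U : SL2C := ⟨!![1,1;0,1], by norm_num [Matrix.det_fin_two_of]⟩ with hU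
      set V : SL2C := ⟨!![1,0;1,1], by norm_num [Matrix.det_fin_two_of]⟩ with hV
      have hc := habel (QuotientGroup.mk U) (QuotientGroup.mk V)
        (by rw [hμ1, mul_one, one_mul]) (by rw [hμ1, mul_one, one_mul])
      rw [← mk_mul, ← mk_mul] at hc
      have h4 := (quot_eq_iff _ _).mp hc
      rw [Matrix.SpecialLinearGroup.coe_mul, Matrix.SpecialLinearGroup.coe_mul] at h4
      rcases h4 with h | h
      · have := Matrix.ext_iff.mpr h 0 0
        norm_num [hU, hV, Matrix.mul_apply, Fin.sum_univ_two] at this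
      · have := Matrix.ext_iff.mpr h 0 0
        norm_num [hU, hV, Matrix.mul_apply, Fin.sum_univ_two] at this
    · -- (M:Mat2)^2 = -1
      obtain ⟨a, b, c, d, hM⟩ : ∃ a b c d, (M : Mat2) = !![a,b;c,d] :=
        ⟨_, _, _, _, Matrix.eta_fin_two _⟩
      have hdet : a*d - b*c = 1 := by
        have := M.2
        rw [hM, Matrix.det_fin_two_of] at this
        exact this
      rw [hM] at hNeg
      have E := fun i j => Matrix.ext_iff.mpr hNeg i j
      have e00 : a*a + b*c = -1 := by
        have := E 0 0; simp [Matrix.mul_apply, Fin.sum_univ_two] at this; linear_combination this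
      have e01 : b*(a+d) = 0 := by
        have := E 0 1; simp [Matrix.mul_apply, Fin.sum_univ_two] at this; linear_combination this
      have e10 : c*(a+d) = 0 := by
        have := E 1 0; simp [Matrix.mul_apply, Fin.sum_univ_two] at this; linear_combination this
      have hd : d = -a := by
        by_cases h : a + d = 0
        · linear_combination h
        · exfalso
          have hb0 : b = 0 := by
            rcases mul_eq_zero.mp e01 with h' | h'
            · exact h'
            · exact absurd h' h
          have hc0 : c = 0 := by
            rcases mul_eq_zero.mp e10 with h' | h'
            · exact h'
            · exact absurd h' h
          have ha2 : a*a = -1 := by linear_combination e00 - c * hb0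
          have ha0 : a ≠ 0 := by intro h'; rw [h'] at ha2; norm_num at ha2
          have hax : a * (a + d) = 0 := by linear_combination ha2 + hdet + b * hc0 - c * hb0 + c * hb0
          rcases mul_eq_zero.mp hax with h' | h'
          · exact ha0 h'
          · exact h h'
      subst hd
      -- construct anticommuting partner entries
      have hs2 : (Complex.I * (Real.sqrt 2 : ℂ)) * (Complex.I * (Real.sqrt 2 : ℂ)) = -2 := by
        have h2' : ((Real.sqrt 2 : ℝ) : ℂ) * ((Real.sqrt 2 : ℝ) : ℂ) = 2 := by
          rw [← Complex.ofReal_mul, Real.mul_self_sqrt (by norm_num)]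
          norm_num
        calc Complex.I * (Real.sqrt 2 : ℂ) * (Complex.I * (Real.sqrt 2 : ℂ))
            = (Complex.I * Complex.I) * ((Real.sqrt 2 : ℂ) * (Real.sqrt 2 : ℂ)) := by ring
          _ = -2 := by rw [Complex.I_mul_I, h2']; ring
      set s : ℂ := Complex.I * (Real.sqrt 2 : ℂ) with hsdef
      obtain ⟨p, q, r, hcon, hdetn⟩ :
          ∃ p q r : ℂ, 2*a*p + b*r + c*q = 0 ∧ p*p + q*r = -1 := by
        by_cases hb : b = 0
        · by_cases hc : c = 0
          · exact ⟨0, 1, -1, by rw [hb, hc]; ring, by ring⟩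
          · refine ⟨a + s, -(2*a*(a + s) + b*c)/c, c, ?_, ?_⟩
            · field_simp
              ring
            · have hqr : (-(2*a*(a + s) + b*c)/c) * c = -(2*a*(a+s) + b*c) :=
                div_mul_cancel₀ _ hc
              rw [hqr]
              linear_combination hs2 - e00
        · refine ⟨a + s, b, -(2*a*(a + s) + c*b)/b, ?_, ?_⟩
          · have hbr : b * (-(2*a*(a + s) + c*b)/b) = -(2*a*(a+s) + c*b) := by
              rw [mul_div_assoc']
              exact mul_div_cancel_left₀ _ hb
            rw [hbr]
            ring
          · have hbr : b * (-(2*a*(a + s) + c*b)/b) = -(2*a*(a+s) + c*b) := by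
              rw [mul_div_assoc']
              exact mul_div_cancel_left₀ _ hb
            rw [hbr]
            linear_combination hs2 - e00
      set NMat : Mat2 := !![p, q; r, -p] with hNMat
      set PMat : Mat2 := !![3/5 + 4/5*a, 4/5*b; 4/5*c, 3/5 - 4/5*a] with hPMat
      have hNdet : NMat.det = 1 := by
        rw [hNMat, Matrix.det_fin_two_of]; linear_combination -hdetn
      have hPdet : PMat.det = 1 := by
        rw [hPMat, Matrix.det_fin_two_of]; linear_combination (-16/25 : ℂ) * e00
      set N : SL2C := ⟨NMat, hNdet⟩ with hN
      set P : SL2C := ⟨PMat, hPdet⟩ with hP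
      have hPM : PMat * (M : Mat2) = (M : Mat2) * PMat := by
        rw [hM, hPMat]
        ext i j
        fin_cases i <;> fin_cases j <;>
          (simp [Matrix.mul_apply, Fin.sum_univ_two]; ring)
      have hNM : NMat * (M : Mat2) = -((M : Mat2) * NMat) := by
        rw [hM, hNMat]
        ext i j
        fin_cases i <;> fin_cases j <;> simp [Matrix.mul_apply, Fin.sum_univ_two]
        · linear_combination hcon
        · ring
        · ring
        · linear_combination hcon
      have comm1 : (QuotientGroup.mk P : L1) * QuotientGroup.mk M
          = QuotientGroup.mk M * QuotientGroup.mk P := by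
        rw [← mk_mul, ← mk_mul]
        apply (quot_eq_iff _ _).mpr
        left
        rw [Matrix.SpecialLinearGroup.coe_mul, Matrix.SpecialLinearGroup.coe_mul]
        exact hPM
      have comm2 : (QuotientGroup.mk N : L1) * QuotientGroup.mk M
          = QuotientGroup.mk M * QuotientGroup.mk N := by
        rw [← mk_mul, ← mk_mul]
        apply (quot_eq_iff _ _).mpr
        right
        rw [Matrix.SpecialLinearGroup.coe_mul, Matrix.SpecialLinearGroup.coe_mul]
        exact hNM
      have hc := habel (QuotientGroup.mk P) (QuotientGroup.mk N) comm1 comm2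
      rw [← mk_mul, ← mk_mul] at hc
      have h4 := (quot_eq_iff _ _).mp hc
      rw [Matrix.SpecialLinearGroup.coe_mul, Matrix.SpecialLinearGroup.coe_mul] at h4
      -- P = (3/5)•1 + (4/5)•M
      have hPdecomp : PMat = (3/5 : ℂ) • (1 : Mat2) + (4/5 : ℂ) • (M : Mat2) := by
        rw [hM, hPMat]
        ext i j
        fin_cases i <;> fin_cases j <;> simp [Matrix.smul_apply] <;> ring
      have hPcoe : (P : Mat2) = PMat := rfl
      have hNcoe : (N : Mat2) = NMat := rfl
      rw [hPcoe, hNcoe] at h4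
      rcases h4 with h | h
      · -- PN = NP forces M*N = 0, contradicting det
        have hh := h
        rw [hPdecomp, Matrix.add_mul, Matrix.mul_add, smul_mul_assoc, smul_mul_assoc,
          mul_smul_comm, mul_smul_comm, one_mul, mul_one] at hh
        have h' : (4/5 : ℂ) • ((M : Mat2) * NMat) = (4/5 : ℂ) • (NMat * (M : Mat2)) :=
          add_left_cancel hh
        have h'' : (M : Mat2) * NMat = NMat * (M : Mat2) :=
          smul_cancel_mat _ (by norm_num) _ _ h'
        rw [hNM] at h''
        have hMN0 : (M : Mat2) * NMat = 0 := eq_neg_self_mat _ h''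
        have hcontra : (0 : ℂ) = 1 := by
          calc (0 : ℂ) = Matrix.det (0 : Mat2) := by simp
            _ = Matrix.det ((M : Mat2) * NMat) := by rw [hMN0]
            _ = Matrix.det (M : Mat2) * Matrix.det NMat := by rw [Matrix.det_mul]
            _ = 1 := by rw [M.2, hNdet, mul_one]
        norm_num at hcontra
      · -- PN = -(NP) forces N = 0, contradicting det
        have hh := h
        rw [hPdecomp, Matrix.add_mul, Matrix.mul_add, smul_mul_assoc, smul_mul_assoc,
          mul_smul_comm, mul_smul_comm, one_mul, mul_one, neg_add, ← smul_neg, ← smul_neg,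
          hNM, neg_neg] at hh
        have h' : (3/5 : ℂ) • NMat = (3/5 : ℂ) • (-NMat) := add_right_cancel hh
        have hN0 : NMat = -NMat := smul_cancel_mat _ (by norm_num) _ _ h'
        have hN0' : NMat = 0 := eq_neg_self_mat _ hN0
        rw [hN0'] at hNdet
        simp at hNdet
  · -- μ² ≠ 1 → centralizer abelian
    intro hsq x y hx hy
    obtain ⟨A, rfl⟩ := QuotientGroup.mk_surjective x
    obtain ⟨B, rfl⟩ := QuotientGroup.mk_surjective y
    have hMM : ¬((M : Mat2) * (M : Mat2) = 1 ∨ (M : Mat2) * (M : Mat2) = -1) := by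
      intro h
      apply hsq
      have h2 : (QuotientGroup.mk (M * M) : L1) = QuotientGroup.mk 1 := by
        apply (quot_eq_iff _ _).mpr
        rw [Matrix.SpecialLinearGroup.coe_mul]
        simpa using h
      rw [mk_mul, QuotientGroup.mk_one] at h2
      rw [sq]
      exact h2
    push_neg at hMM
    obtain ⟨hMM1, hMM2⟩ := hMM
    have key : ∀ C : SL2C, (QuotientGroup.mk C : L1) * QuotientGroup.mk M
        = QuotientGroup.mk M * QuotientGroup.mk C →
        (C : Mat2) * (M : Mat2) = (M : Mat2) * (C : Mat2) := by
      intro C hC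
      have h2 : (QuotientGroup.mk (C * M) : L1) = QuotientGroup.mk (M * C) := by
        rw [mk_mul, mk_mul]; exact hC
      have h3 := (quot_eq_iff _ _).mp h2
      rw [Matrix.SpecialLinearGroup.coe_mul, Matrix.SpecialLinearGroup.coe_mul] at h3
      rcases h3 with h | h
      · exact h
      · exact absurd (anticomm_sq_eq_neg_one M C h) hMM2
    have hA := key A hx
    have hB := key B hy
    have hns : (M : Mat2) 0 1 ≠ 0 ∨ (M : Mat2) 1 0 ≠ 0 ∨ (M : Mat2) 0 0 ≠ (M : Mat2) 1 1 := by
      by_contra h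
      push_neg at h
      obtain ⟨hb0, hc0, had⟩ := h
      apply hMM1
      obtain ⟨a, b, c, d, hM⟩ : ∃ a b c d, (M : Mat2) = !![a,b;c,d] :=
        ⟨_, _, _, _, Matrix.eta_fin_two _⟩
      have hdet := M.2
      rw [hM, Matrix.det_fin_two_of] at hdet
      rw [hM] at hb0 hc0 had ⊢
      simp at hb0 hc0 had
      subst hb0
      subst hc0
      have hda : d = a := had.symm
      subst hda
      ext i j
      fin_cases i <;> fin_cases j <;> simp [Matrix.mul_apply, Fin.sum_univ_two] <;>
        linear_combination hdet
    have hAB : (A : Mat2) * (B : Mat2) = (B : Mat2) * (A : Mat2) :=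
      commutant_matrix (M : Mat2) (A : Mat2) (B : Mat2) hns hA hB
    rw [← mk_mul, ← mk_mul]
    apply (quot_eq_iff _ _).mpr
    left
    rw [Matrix.SpecialLinearGroup.coe_mul, Matrix.SpecialLinearGroup.coe_mul]
    exact hAB
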